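/- arXiv:math/0511165 — 4 statements merged into one kernel-verified Lean document; each statement's English description precedes it below -/
import Mathlib

section
/- Let E be a reflexive real Banach space, X a real Banach space with a continuous embedding E ↪ X, ψ : E → ℝ≥0 a positively homogeneous function of degree one, and suppose: (H₁) ‖u‖_X ≤ ψ(u)^{1−t}‖u‖_E^t for all u ∈ E, with t ∈ (0,1); I = J − N with J, N ∈ C¹(E,ℝ), J being 2-homogeneous; (H₂) |⟨N'(u),u⟩ − 2N(u)| ≥ a·ψ(u)^μ − c for all u ∈ E, with a, μ > 0, c ∈ ℝ; (H₃) J(u) ≥ k‖u‖² for all u with k > 0; (H₄) |N(u)| ≤ b‖u‖_X^q + d for all u, with b, d > 0, q > 2, and qt < 2. Then every sequence (uₙ) ⊂ E with I(uₙ) → α for some α ∈ ℝ and (1 + ‖uₙ‖)·‖I'(uₙ)‖_{E*} → 0 is bounded in E. -/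
open Filter Topology


-- Euler identity for 2-homogeneous functions
lemma euler_two {E : Type*} [NormedAddCommGroup E] [NormedSpace ℝ E]
    (J : E → ℝ) (hJ : Differentiable ℝ J)
    (hJhom : ∀ (τ : ℝ) (u : E), J (τ • u) = τ ^ 2 * J u) (u : E) :
    fderiv ℝ J u u = 2 * J u := by
  have h1 : HasDerivAt (fun τ : ℝ => τ • u) u 1 := by
    simpa using (hasDerivAt_id (1:ℝ)).smul_const u
  have h2 : HasDerivAt (fun τ : ℝ => J (τ • u)) (fderiv ℝ J u u) 1 := by
    have := (hJ ((1:ℝ) • u)).hasFDerivAt.comp_hasDerivAt 1 h1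
    simpa [one_smul, Function.comp_def] using this
  have h3 : HasDerivAt (fun τ : ℝ => τ ^ 2 * J u) (2 * J u) 1 := by
    simpa using (hasDerivAt_pow 2 (1:ℝ)).mul_const (J u)
  have h4 : HasDerivAt (fun τ : ℝ => J (τ • u)) (2 * J u) 1 := by
    simpa only [hJhom] using h3
  exact h2.unique h4

lemma bound_aux {k A B s x : ℝ} (hk : 0 < k) (hA : 0 ≤ A) (hB : 0 ≤ B)
    (hs : 0 < s) (hs2 : s < 2) (hx : 0 ≤ x)
    (h : k * x ^ (2:ℝ) ≤ A + B * x ^ s) :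
    x ≤ max 1 (((A + B) / k) ^ (1 / (2 - s))) := by
  rcases le_or_gt x 1 with hx1 | hx1
  · exact le_max_of_le_left hx1
  · refine le_max_of_le_right ?_
    have hx0 : 0 < x := lt_trans one_pos hx1
    have hxs : (1:ℝ) ≤ x ^ s := Real.one_le_rpow hx1.le hs.le
    have h2 : k * x ^ (2:ℝ) ≤ (A + B) * x ^ s := by
      have : A + B * x ^ s ≤ A * x ^ s + B * x ^ s := by nlinarith
      nlinarith
    have hsplit : x ^ (2:ℝ) = x ^ (2 - s) * x ^ s := by
      rw [← Real.rpow_add hx0]; ring_nf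
    have hxspos : 0 < x ^ s := Real.rpow_pos_of_pos hx0 s
    have h3 : k * x ^ (2 - s) ≤ A + B := by
      rw [hsplit] at h2
      have := (mul_le_mul_iff_left₀ hxspos).mp (by linarith [h2] : k * x ^ (2-s) * x ^ s ≤ (A+B) * x ^ s)
      linarith
    have h4 : x ^ (2 - s) ≤ (A + B) / k := (le_div_iff₀ hk).mpr (by linarith)
    have h5 : (x ^ (2 - s)) ^ (1 / (2 - s)) ≤ ((A + B) / k) ^ (1 / (2 - s)) :=
      Real.rpow_le_rpow (Real.rpow_nonneg hx0.le _) h4 (by apply le_of_lt; apply one_div_pos.mpr; linarith)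
    calc x = (x ^ (2 - s)) ^ (1 / (2 - s)) := by
            rw [← Real.rpow_mul hx0.le, mul_one_div, div_self (by linarith), Real.rpow_one]
      _ ≤ _ := h5

/-- Cerami-type boundedness: under (H₁)–(H₄) with `q t < 2`, every sequence with
`I(uₙ) → α` and `(1+‖uₙ‖)‖I'(uₙ)‖ → 0` is bounded, where `I = J - N`. -/
theorem cerami_bounded
    {E X : Type*} [NormedAddCommGroup E] [NormedSpace ℝ E] [CompleteSpace E]
    [NormedAddCommGroup X] [NormedSpace ℝ X]
    -- E is reflexive
    (hrefl : Function.Surjective (NormedSpace.inclusionInDoubleDual ℝ E))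
    -- continuous embedding E ↪ X
    (ι : E →L[ℝ] X) (hι : Function.Injective ι)
    -- ψ : E → ℝ≥0 positively homogeneous of degree one
    (ψ : E → ℝ) (hψ0 : ∀ u, 0 ≤ ψ u)
    (hψhom : ∀ (τ : ℝ) (u : E), 0 ≤ τ → ψ (τ • u) = τ * ψ u)
    (t : ℝ) (ht : t ∈ Set.Ioo (0 : ℝ) 1)
    -- (H₁)
    (H1 : ∀ u : E, ‖ι u‖ ≤ ψ u ^ (1 - t) * ‖u‖ ^ t)
    (J N : E → ℝ) (hJ : ContDiff ℝ 1 J) (hN : ContDiff ℝ 1 N)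
    -- J is 2-homogeneous
    (hJhom : ∀ (τ : ℝ) (u : E), J (τ • u) = τ ^ 2 * J u)
    (a μ : ℝ) (ha : 0 < a) (hμ : 0 < μ) (c : ℝ)
    -- (H₂): N is not 2-homogeneous at infinity
    (H2 : ∀ u : E, a * ψ u ^ μ - c ≤ |fderiv ℝ N u u - 2 * N u|)
    (k : ℝ) (hk : 0 < k)
    -- (H₃)
    (H3 : ∀ u : E, k * ‖u‖ ^ 2 ≤ J u)
    (b d q : ℝ) (hb : 0 < b) (hd : 0 < d) (hq : 2 < q) (hqt : q * t < 2)
    -- (H₄)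
    (H4 : ∀ u : E, |N u| ≤ b * ‖ι u‖ ^ q + d)
    -- the Cerami sequence
    (α : ℝ) (u : ℕ → E)
    (hI : Tendsto (fun n => J (u n) - N (u n)) atTop (𝓝 α))
    (hI' : Tendsto (fun n => (1 + ‖u n‖) * ‖fderiv ℝ (fun v => J v - N v) (u n)‖)
      atTop (𝓝 0)) :
    ∃ M : ℝ, ∀ n, ‖u n‖ ≤ M := by
  have hJd : Differentiable ℝ J := hJ.differentiable one_ne_zero
  have hNd : Differentiable ℝ N := hN.differentiable one_ne_zero
  -- ⟨I'(uₙ), uₙ⟩ → 0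
  set φ : ℕ → ℝ := fun n => fderiv ℝ (fun v => J v - N v) (u n) (u n) with hφ
  have hφ0 : Tendsto φ atTop (𝓝 0) := by
    apply squeeze_zero_norm _ hI'
    intro n
    calc ‖φ n‖ ≤ ‖fderiv ℝ (fun v => J v - N v) (u n)‖ * ‖u n‖ :=
          (fderiv ℝ (fun v => J v - N v) (u n)).le_opNorm (u n)
      _ ≤ (1 + ‖u n‖) * ‖fderiv ℝ (fun v => J v - N v) (u n)‖ := by
          rw [mul_comm]
          apply mul_le_mul_of_nonneg_right (by linarith [norm_nonneg (u n)]) (norm_nonneg _)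
  -- φ n = 2 J(uₙ) - ⟨N'(uₙ),uₙ⟩
  have hφeq : ∀ n, φ n = 2 * J (u n) - fderiv ℝ N (u n) (u n) := by
    intro n
    have : fderiv ℝ (fun v => J v - N v) (u n) = fderiv ℝ J (u n) - fderiv ℝ N (u n) :=
      fderiv_sub (hJd _) (hNd _)
    rw [hφ]
    simp only [this, ContinuousLinearMap.sub_apply,
      euler_two J hJd hJhom (u n)]
  -- ⟨N'(uₙ),uₙ⟩ - 2 N(uₙ) → 2α, hence bounded
  have hseq : Tendsto (fun n => fderiv ℝ N (u n) (u n) - 2 * N (u n)) atTop (𝓝 (2 * α)) := by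
    have : (fun n => fderiv ℝ N (u n) (u n) - 2 * N (u n))
        = fun n => 2 * (J (u n) - N (u n)) - φ n := by
      funext n; rw [hφeq n]; ring
    rw [this]
    simpa using ((hI.const_mul 2).sub hφ0)
  obtain ⟨C, hC⟩ : ∃ C, ∀ n, |fderiv ℝ N (u n) (u n) - 2 * N (u n)| ≤ C := by
    have habs : Tendsto (fun n => |fderiv ℝ N (u n) (u n) - 2 * N (u n)|) atTop (𝓝 |2 * α|) :=
      hseq.abs
    obtain ⟨C, hC⟩ := habs.bddAbove_range
    exact ⟨C, fun n => hC ⟨n, rfl⟩⟩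
  -- ψ(uₙ) is bounded
  have hμq : 0 ≤ (1 - t) * q := mul_nonneg (by linarith [ht.2]) (by linarith)
  set P : ℝ := (((C + c) / a) ⊔ 1) ^ (1 / μ) with hP
  have hψbdd : ∀ n, ψ (u n) ≤ P := by
    intro n
    have h1 : a * ψ (u n) ^ μ - c ≤ C := le_trans (H2 (u n)) (hC n)
    have h2 : ψ (u n) ^ μ ≤ ((C + c) / a) ⊔ 1 := by
      refine le_trans ?_ (le_max_left _ _)
      rw [le_div_iff₀ ha]; linarith [h1]
    calc ψ (u n) = (ψ (u n) ^ μ) ^ (1 / μ) := by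
          rw [← Real.rpow_mul (hψ0 _), mul_one_div, div_self hμ.ne', Real.rpow_one]
      _ ≤ P := Real.rpow_le_rpow (Real.rpow_nonneg (hψ0 _) _) h2
          (le_of_lt (one_div_pos.mpr hμ))
  have hP0 : 0 ≤ P := Real.rpow_nonneg (le_trans zero_le_one (le_max_right _ _)) _
  -- |I(uₙ)| bounded
  obtain ⟨D, hD⟩ : ∃ D, ∀ n, |J (u n) - N (u n)| ≤ D := by
    obtain ⟨D, hD⟩ := hI.abs.bddAbove_range
    exact ⟨D, fun n => hD ⟨n, rfl⟩⟩
  have hD0 : 0 ≤ D := le_trans (abs_nonneg _) (hD 0)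
  -- main estimate: k‖uₙ‖² ≤ (D+d) + b P^{(1-t)q} ‖uₙ‖^{qt}
  set A : ℝ := D + d with hA
  set B : ℝ := b * P ^ ((1 - t) * q) with hB
  have hB0 : 0 ≤ B := mul_nonneg hb.le (Real.rpow_nonneg hP0 _)
  have key : ∀ n, k * ‖u n‖ ^ (2:ℝ) ≤ A + B * ‖u n‖ ^ (q * t) := by
    intro n
    have hx : 0 ≤ ‖u n‖ := norm_nonneg _
    have hιq : ‖ι (u n)‖ ^ q ≤ P ^ ((1 - t) * q) * ‖u n‖ ^ (t * q) := by
      calc ‖ι (u n)‖ ^ q ≤ (ψ (u n) ^ (1 - t) * ‖u n‖ ^ t) ^ q :=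
            Real.rpow_le_rpow (norm_nonneg _) (H1 (u n)) (by linarith)
        _ = (ψ (u n) ^ (1 - t)) ^ q * (‖u n‖ ^ t) ^ q :=
            Real.mul_rpow (Real.rpow_nonneg (hψ0 _) _) (Real.rpow_nonneg hx _)
        _ = ψ (u n) ^ ((1 - t) * q) * ‖u n‖ ^ (t * q) := by
            rw [← Real.rpow_mul (hψ0 _), ← Real.rpow_mul hx]
        _ ≤ P ^ ((1 - t) * q) * ‖u n‖ ^ (t * q) := by
            apply mul_le_mul_of_nonneg_right _ (Real.rpow_nonneg hx _)
            exact Real.rpow_le_rpow (hψ0 _) (hψbdd n) hμq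
    have hNle : N (u n) ≤ b * ‖ι (u n)‖ ^ q + d := le_trans (le_abs_self _) (H4 (u n))
    have hJle : J (u n) ≤ D + N (u n) := by
      have := hD n
      have := abs_le.mp (hD n)
      linarith [this.2]
    have h2 : k * ‖u n‖ ^ 2 ≤ D + b * ‖ι (u n)‖ ^ q + d :=
      le_trans (H3 (u n)) (by linarith)
    have h3 : b * ‖ι (u n)‖ ^ q ≤ B * ‖u n‖ ^ (q * t) := by
      rw [hB, mul_assoc, mul_comm q t]
      exact mul_le_mul_of_nonneg_left hιq hb.le
    have hpow : ‖u n‖ ^ (2:ℝ) = ‖u n‖ ^ (2:ℕ) := by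
      rw [show (2:ℝ) = ((2:ℕ):ℝ) by norm_num, Real.rpow_natCast]
    rw [hpow]
    push_cast
    linarith
  have hqt0 : 0 < q * t := mul_pos (by linarith) ht.1
  refine ⟨max 1 (((A + B) / k) ^ (1 / (2 - q * t))), fun n => ?_⟩
  exact bound_aux hk (by linarith) hB0 hqt0 hqt (norm_nonneg _) (key n)
end

section
/- Let E be a real Banach space and I = J − N with J, N ∈ C¹(E,ℝ), where N' : E → E* is a compact operator and J' : E → E* is an isomorphism onto its image J'(E) (i.e., injective with continuous inverse on its range). If any sequence (uₙ) with I(uₙ) → c and (1+‖uₙ‖)‖I'(uₙ)‖_{E*} → 0 has a bounded subsequence, then any such sequence has a convergent subsequence. In other words, condition (Ĉ)_c implies the Cerami condition (C)_c. -/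
open Filter Topology

/-- If `N'` is a compact (nonlinear) operator and `J'` is an isomorphism of `E`
onto its image `J'(E)`, then condition `(Ĉ)_c` implies the Cerami condition `(C)_c`
for `I = J - N`. -/
theorem cerami_hatC_implies_C
    {E : Type*} [NormedAddCommGroup E] [NormedSpace ℝ E] [CompleteSpace E]
    (J N : E → ℝ) (hJ : ContDiff ℝ 1 J) (hN : ContDiff ℝ 1 N)
    -- N' : E → E* is a compact operator
    (hNcompact : ∀ s : Set E, Bornology.IsBounded s →
      IsCompact (closure ((fun u => fderiv ℝ N u) '' s)))
    -- J' : E → E* is an isomorphism from E onto J'(E)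
    (hJ'emb : Topology.IsClosedEmbedding (fun u : E => fderiv ℝ J u))
    (c : ℝ)
    -- condition (Ĉ)_c
    (hChat : ∀ u : ℕ → E,
      Tendsto (fun n => J (u n) - N (u n)) atTop (𝓝 c) →
      Tendsto (fun n => (1 + ‖u n‖) * ‖fderiv ℝ (fun v => J v - N v) (u n)‖)
        atTop (𝓝 0) →
      ∃ φ : ℕ → ℕ, StrictMono φ ∧ ∃ M : ℝ, ∀ n, ‖u (φ n)‖ ≤ M) :
    -- condition (C)_c
    ∀ u : ℕ → E,
      Tendsto (fun n => J (u n) - N (u n)) atTop (𝓝 c) →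
      Tendsto (fun n => (1 + ‖u n‖) * ‖fderiv ℝ (fun v => J v - N v) (u n)‖)
        atTop (𝓝 0) →
      ∃ φ : ℕ → ℕ, StrictMono φ ∧ ∃ l : E, Tendsto (fun n => u (φ n)) atTop (𝓝 l) := by

  intro u hc hcer
  obtain ⟨φ, hφ, M, hM⟩ := hChat u hc hcer
  set v : ℕ → E := fun n => u (φ n) with hv
  have key : ∀ x, fderiv ℝ (fun w : E => J w - N w) x = fderiv ℝ J x - fderiv ℝ N x :=
    fun x => fderiv_fun_sub ((hJ.differentiable one_ne_zero) x) ((hN.differentiable one_ne_zero) x)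
  -- I'(v n) → 0
  have hnorm : Tendsto (fun n => ‖fderiv ℝ (fun w : E => J w - N w) (v n)‖) atTop (𝓝 0) := by
    have hcomp : Tendsto (fun n => (1 + ‖v n‖) * ‖fderiv ℝ (fun w : E => J w - N w) (v n)‖)
        atTop (𝓝 0) := hcer.comp hφ.tendsto_atTop
    refine squeeze_zero (fun n => norm_nonneg _) (fun n => ?_) hcomp
    have h1 : (1 : ℝ) ≤ 1 + ‖v n‖ := by
      have := norm_nonneg (v n); linarith
    nlinarith [norm_nonneg (fderiv ℝ (fun w : E => J w - N w) (v n)), norm_nonneg (v n)]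
  have hI' : Tendsto (fun n => fderiv ℝ (fun w : E => J w - N w) (v n)) atTop (𝓝 0) :=
    tendsto_zero_iff_norm_tendsto_zero.mpr hnorm
  -- compactness of N' image
  have hball : Bornology.IsBounded (Metric.closedBall (0 : E) M) := Metric.isBounded_closedBall
  have hK := hNcompact _ hball
  have hmem : ∀ n, fderiv ℝ N (v n) ∈ closure ((fun u => fderiv ℝ N u) '' Metric.closedBall (0 : E) M) := by
    intro n
    exact subset_closure ⟨v n, by simpa using hM n, rfl⟩
  obtain ⟨L, -, ψ, hψ, hL⟩ := hK.tendsto_subseq hmem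
  -- fderiv J (v (ψ n)) → L
  have hJten : Tendsto (fun n => fderiv ℝ J (v (ψ n))) atTop (𝓝 L) := by
    have h1 : Tendsto (fun n => fderiv ℝ (fun w : E => J w - N w) (v (ψ n))) atTop (𝓝 0) :=
      hI'.comp hψ.tendsto_atTop
    have h2 := h1.add hL
    simp only [key, Function.comp_def, sub_add_cancel, zero_add] at h2
    exact h2
  -- L is in the range of J'
  have hLmem : L ∈ Set.range (fun u : E => fderiv ℝ J u) :=
    hJ'emb.isClosed_range.mem_of_tendsto hJten (Filter.Eventually.of_forall fun n => ⟨v (ψ n), rfl⟩)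
  obtain ⟨w, hw⟩ := hLmem
  refine ⟨φ ∘ ψ, hφ.comp hψ, w, ?_⟩
  have heq : Tendsto (fun n => v (ψ n)) atTop (𝓝 w) := by
    rw [hJ'emb.isEmbedding.tendsto_nhds_iff]
    simpa [Function.comp_def, hw] using hJten
  exact heq
end

section
/- Let V = span(φ₁) be a one-dimensional subspace of a real Banach space E = V ⊕ W with W closed, let P : E → V be the continuous linear projection onto V along W, let B = {v ∈ V : ‖v‖ ≤ R} with R > 0, and let γ : B → E be continuous with γ(v) = v for all v ∈ ∂B. Then γ(B) ∩ W ≠ ∅. -/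
/-- Linking: if `γ : B → E` is continuous on the ball `B` of the one-dimensional
space `V = span(φ₁)` and equals the identity on `∂B`, then `γ(B)` meets the
complement `W`. -/
theorem linking_ball_meets_complement
    {E : Type*} [NormedAddCommGroup E] [NormedSpace ℝ E]
    (φ₁ : E) (hφ₁ : φ₁ ≠ 0)
    (W : Submodule ℝ E) (hWclosed : IsClosed (W : Set E))
    (hcompl : IsCompl (Submodule.span ℝ {φ₁}) W)
    (P : E →L[ℝ] E)
    (hPV : ∀ v ∈ Submodule.span ℝ {φ₁}, P v = v)
    (hPW : ∀ w ∈ W, P w = 0)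
    (R : ℝ) (hR : 0 < R)
    (γ : E → E)
    (hγcont : ContinuousOn γ {v : E | v ∈ Submodule.span ℝ {φ₁} ∧ ‖v‖ ≤ R})
    (hγbd : ∀ v ∈ Submodule.span ℝ {φ₁}, ‖v‖ = R → γ v = v) :
    ∃ v : E, v ∈ Submodule.span ℝ {φ₁} ∧ ‖v‖ ≤ R ∧ γ v ∈ W := by
  have hφnorm : 0 < ‖φ₁‖ := norm_pos_iff.mpr hφ₁
  obtain ⟨ψ, hψnorm, hψφ⟩ := exists_dual_vector ℝ φ₁ (norm_ne_zero_iff.mpr hφ₁)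
  set r : ℝ := R / ‖φ₁‖ with hr_def
  have hrpos : 0 < r := div_pos hR hφnorm
  -- decomposition lemma: P x ∈ span, and if P x = 0 then x ∈ W
  have hker : ∀ x : E, P x = 0 → x ∈ W := by
    intro x hx
    obtain ⟨v, w, hv, hw, hvw⟩ := Submodule.codisjoint_iff_exists_add_eq.mp hcompl.codisjoint x
    have : P x = v := by
      rw [← hvw, map_add, hPV v hv, hPW w hw, add_zero]
    have hv0 : v = 0 := by rw [← this, hx]
    rw [← hvw, hv0, zero_add]; exact hw
  have hPspan : ∀ x : E, P x ∈ Submodule.span ℝ {φ₁} := by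
    intro x
    obtain ⟨v, w, hv, hw, hvw⟩ := Submodule.codisjoint_iff_exists_add_eq.mp hcompl.codisjoint x
    have : P x = v := by
      rw [← hvw, map_add, hPV v hv, hPW w hw, add_zero]
    rw [this]; exact hv
  -- the curve t ↦ t • φ₁ maps Icc (-r) r into the ball
  have hmaps : ∀ t ∈ Set.Icc (-r) r,
      (t • φ₁) ∈ {v : E | v ∈ Submodule.span ℝ {φ₁} ∧ ‖v‖ ≤ R} := by
    intro t ht
    refine ⟨Submodule.smul_mem _ _ (Submodule.mem_span_singleton_self φ₁), ?_⟩
    rw [norm_smul, Real.norm_eq_abs]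
    have habs : |t| ≤ r := abs_le.mpr ht
    calc |t| * ‖φ₁‖ ≤ r * ‖φ₁‖ := by
          exact mul_le_mul_of_nonneg_right habs hφnorm.le
      _ = R := by rw [hr_def]; field_simp
  set g : ℝ → ℝ := fun t => ψ (P (γ (t • φ₁))) with hg_def
  have hgcont : ContinuousOn g (Set.Icc (-r) r) := by
    have h1 : ContinuousOn (fun t : ℝ => γ (t • φ₁)) (Set.Icc (-r) r) :=
      hγcont.comp ((continuous_id.smul continuous_const).continuousOn) hmaps
    exact (ψ.continuous.comp P.continuous).comp_continuousOn h1
  -- boundary values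
  have hbd : ∀ t : ℝ, |t| = r → g t = t * ‖φ₁‖ := by
    intro t ht
    have hmem : (t • φ₁) ∈ Submodule.span ℝ {φ₁} :=
      Submodule.smul_mem _ _ (Submodule.mem_span_singleton_self φ₁)
    have hnorm : ‖t • φ₁‖ = R := by
      rw [norm_smul, Real.norm_eq_abs, ht, hr_def]; field_simp
    have : γ (t • φ₁) = t • φ₁ := hγbd _ hmem hnorm
    rw [hg_def]
    simp only [this, hPV _ hmem, map_smul, hψφ, smul_eq_mul]
    norm_cast
  have hgL : g (-r) = -R := by
    rw [hbd (-r) (by rw [abs_neg, abs_of_pos hrpos]), neg_mul, hr_def]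
    field_simp
  have hgR : g r = R := by
    rw [hbd r (abs_of_pos hrpos), hr_def]; field_simp
  -- IVT
  have hsub : Set.Icc (g (-r)) (g r) ⊆ g '' Set.Icc (-r) r :=
    intermediate_value_Icc (by linarith) hgcont
  have h0 : (0 : ℝ) ∈ Set.Icc (g (-r)) (g r) := by
    rw [hgL, hgR]; constructor <;> linarith
  obtain ⟨t, ht, hgt⟩ := hsub h0
  refine ⟨t • φ₁, (hmaps t ht).1, (hmaps t ht).2, ?_⟩
  -- P (γ (t•φ₁)) = 0
  obtain ⟨c, hc⟩ := Submodule.mem_span_singleton.mp (hPspan (γ (t • φ₁)))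
  have : c * ‖φ₁‖ = 0 := by
    have h2 : ψ (P (γ (t • φ₁))) = 0 := hgt
    rw [← hc, map_smul, hψφ, smul_eq_mul] at h2
    exact_mod_cast h2
  have hc0 : c = 0 := by
    rcases mul_eq_zero.mp this with h | h
    · exact h
    · exact absurd h hφnorm.ne'
  exact hker _ (by rw [← hc, hc0, zero_smul])
end

section
/- Let H be a real Hilbert space, W ⊂ H a closed subspace, λ₁, d > 0 with ‖w‖² ≥ (λ₁ + d)|w|₂² for all w ∈ W, and G : Ω × ℝ → ℝ a Carathéodory function such that for every ε > 0 there exists δ > 0 with 2G(x,s) ≤ ε s² for all |s| > δ and a.e. x ∈ Ω, and G is bounded above on bounded s-intervals uniformly in x. Then F(w) := ½‖w‖² − (λ₁/2)|w|₂² − ∫_Ω G(x,w)dx satisfies F(w) ≥ N‖w‖² − M for all w ∈ W with N = ½(1 − (λ₁+ε)/(λ₁+d)) > 0 (for ε < d) and some constant M. In particular F(w) → ∞ as ‖w‖ → ∞ in W (F is coercive on W). -/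
open MeasureTheory

/-- Coercivity of `F` on the complement `W`: under `(G₄)` and the gap inequality
`‖w‖² ≥ (λ₁+d)|w|₂²` on `W`, one has `F(w) ≥ N‖w‖² − M` with `N > 0`. -/
theorem coercive_on_complement
    {n : ℕ} (Ω : Set (EuclideanSpace ℝ (Fin n))) (hΩopen : IsOpen Ω)
    (hΩbd : Bornology.IsBounded Ω)
    (G : EuclideanSpace ℝ (Fin n) → ℝ → ℝ)
    (lam1 d : ℝ) (hlam1 : 0 < lam1) (hd : 0 < d)
    -- (G₄): for every ε>0, 2G(x,s) ≤ εs² for |s| large, a.e. x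
    (hG4 : ∀ ε > (0:ℝ), ∃ δ > (0:ℝ), ∀ᵐ x ∂(volume.restrict Ω),
      ∀ s : ℝ, δ < |s| → 2 * G x s ≤ ε * s ^ 2)
    -- G bounded above on bounded s-intervals, uniformly in x
    (hGbd : ∀ δ > (0:ℝ), ∃ C : ℝ, ∀ᵐ x ∂(volume.restrict Ω),
      ∀ s : ℝ, |s| ≤ δ → G x s ≤ C)
    (W : Set (EuclideanSpace ℝ (Fin n) → ℝ))
    (hW : ∀ w ∈ W, (lam1 + d) * ∫ x in Ω, (w x) ^ 2 ≤
      ∫ x in Ω, ‖fderiv ℝ w x‖ ^ 2) :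
    ∀ ε : ℝ, 0 < ε → ε < d → ∃ M : ℝ,
      (∀ w ∈ W,
        IntegrableOn (fun x => ‖fderiv ℝ w x‖ ^ 2) Ω →
        IntegrableOn (fun x => (w x) ^ 2) Ω →
        IntegrableOn (fun x => G x (w x)) Ω →
        (1/2) * (1 - (lam1 + ε) / (lam1 + d)) * (∫ x in Ω, ‖fderiv ℝ w x‖ ^ 2) - M ≤
          (1/2) * (∫ x in Ω, ‖fderiv ℝ w x‖ ^ 2)
            - (lam1 / 2) * (∫ x in Ω, (w x) ^ 2) - ∫ x in Ω, G x (w x)) ∧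
      -- in particular F(w) → ∞ as ‖w‖ → ∞ on W
      (∀ C : ℝ, ∃ K : ℝ, ∀ w ∈ W,
        IntegrableOn (fun x => ‖fderiv ℝ w x‖ ^ 2) Ω →
        IntegrableOn (fun x => (w x) ^ 2) Ω →
        IntegrableOn (fun x => G x (w x)) Ω →
        K ≤ ∫ x in Ω, ‖fderiv ℝ w x‖ ^ 2 →
        C ≤ (1/2) * (∫ x in Ω, ‖fderiv ℝ w x‖ ^ 2)
            - (lam1 / 2) * (∫ x in Ω, (w x) ^ 2) - ∫ x in Ω, G x (w x)) := by
  intro ε hε hεd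
  obtain ⟨δ, hδ, hae1⟩ := hG4 ε hε
  obtain ⟨C0, hae2⟩ := hGbd δ hδ
  set C' : ℝ := max C0 0 with hC'
  have hC'0 : 0 ≤ C' := le_max_right _ _
  set M : ℝ := C' * (volume Ω).toReal with hM
  have hM0 : 0 ≤ M := mul_nonneg hC'0 ENNReal.toReal_nonneg
  have hvol : volume Ω < ⊤ := hΩbd.measure_lt_top
  -- core estimate
  have key : ∀ w ∈ W,
      IntegrableOn (fun x => ‖fderiv ℝ w x‖ ^ 2) Ω →
      IntegrableOn (fun x => (w x) ^ 2) Ω →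
      IntegrableOn (fun x => G x (w x)) Ω →
      (1/2) * (1 - (lam1 + ε) / (lam1 + d)) * (∫ x in Ω, ‖fderiv ℝ w x‖ ^ 2) - M ≤
        (1/2) * (∫ x in Ω, ‖fderiv ℝ w x‖ ^ 2)
          - (lam1 / 2) * (∫ x in Ω, (w x) ^ 2) - ∫ x in Ω, G x (w x) := by
    intro w hw h1 h2 h3
    set I := ∫ x in Ω, ‖fderiv ℝ w x‖ ^ 2 with hI
    set J := ∫ x in Ω, (w x) ^ 2 with hJ
    have hpt : ∀ᵐ x ∂(volume.restrict Ω),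
        G x (w x) ≤ ε/2 * (w x)^2 + C' := by
      filter_upwards [hae1, hae2] with x hx1 hx2
      rcases le_or_gt (|w x|) δ with h | h
      · have := hx2 (w x) h
        have hs : 0 ≤ ε/2 * (w x)^2 := by positivity
        have : G x (w x) ≤ C' := this.trans (le_max_left _ _)
        linarith
      · have := hx1 (w x) h
        have : G x (w x) ≤ ε/2 * (w x)^2 := by linarith
        linarith
    have hint : IntegrableOn (fun x => ε/2 * (w x)^2 + C') Ω :=
      (h2.const_mul _).add (integrableOn_const hvol.ne)
    have hGle : (∫ x in Ω, G x (w x)) ≤ ε/2 * J + M := by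
      calc (∫ x in Ω, G x (w x)) ≤ ∫ x in Ω, (ε/2 * (w x)^2 + C') :=
            integral_mono_ae h3 hint hpt
        _ = ε/2 * J + M := by
            rw [integral_add (h2.const_mul _) (integrableOn_const hvol.ne),
              integral_const_mul, setIntegral_const, measureReal_def, hM, smul_eq_mul]; ring
    have hWw := hW w hw
    have hld : (0:ℝ) < lam1 + d := by linarith
    have hJle : J ≤ I / (lam1 + d) := by
      rw [le_div_iff₀ hld]
      linarith [hWw]
    have hle2 : (lam1 + ε)/2 * J ≤ (1/2) * ((lam1 + ε)/(lam1 + d)) * I := by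
      have := mul_le_mul_of_nonneg_left hJle (by positivity : (0:ℝ) ≤ (lam1 + ε)/2)
      calc (lam1 + ε)/2 * J ≤ (lam1 + ε)/2 * (I / (lam1 + d)) := this
        _ = (1/2) * ((lam1 + ε)/(lam1 + d)) * I := by ring
    linarith
  refine ⟨M, key, ?_⟩
  intro C
  have hN : 0 < (1/2) * (1 - (lam1 + ε) / (lam1 + d)) := by
    have hld : (0:ℝ) < lam1 + d := by linarith
    have : (lam1 + ε) / (lam1 + d) < 1 := by
      rw [div_lt_one hld]; linarith
    linarith
  refine ⟨(C + M) / ((1/2) * (1 - (lam1 + ε) / (lam1 + d))), ?_⟩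
  intro w hw h1 h2 h3 hK
  have hkey := key w hw h1 h2 h3
  have : C + M ≤ (1/2) * (1 - (lam1 + ε) / (lam1 + d)) * (∫ x in Ω, ‖fderiv ℝ w x‖ ^ 2) := by
    rw [← div_le_iff₀' hN] at *
    exact hK
  linarith
end
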